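/- Let Φ be a reduced crystallographic simply-laced root system with base Δ, let α ∈ Δ, and let δ be a root with c_α(δ) = 1 and δ ≠ α. Then there exists a simple root γ ∈ Δ∖{α} with ⟨δ,γ⟩ > 0; consequently δ − γ is again a root and c_α(δ − γ) = 1. (This is the claim, established in the paper's proof, that α is the unique lowest weight of the Levi module 𝔲_α/[𝔲_α,𝔲_α].) -/
import Mathlib


open scoped InnerProductSpace

namespace PaperRS

variable {E : Type*} [NormedAddCommGroup E] [InnerProductSpace ℝ E]

/-- A reduced crystallographic simply-laced root system, normalized so that every root has
squared length `2` (hence `⟪δ, ε⟫` is the Cartan integer `⟨δ, ε^∨⟩`). -/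
structure IsRootSystem (Φ : Set E) : Prop where
  finite : Φ.Finite
  nonzero : (0 : E) ∉ Φ
  span_top : Submodule.span ℝ Φ = ⊤
  norm_two : ∀ α ∈ Φ, ⟪α, α⟫_ℝ = 2
  reduced : ∀ α ∈ Φ, ∀ t : ℝ, t • α ∈ Φ → t = 1 ∨ t = -1
  cartan_int : ∀ α ∈ Φ, ∀ β ∈ Φ, ∃ n : ℤ, ⟪α, β⟫_ℝ = (n : ℝ)
  reflect_mem : ∀ α ∈ Φ, ∀ β ∈ Φ, β - ⟪β, α⟫_ℝ • α ∈ Φ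

/-- Irreducibility: `Φ` is nonempty and cannot be split into two mutually orthogonal parts. -/
def IsIrreducible (Φ : Set E) : Prop :=
  Φ.Nonempty ∧ ∀ Φ₁ Φ₂ : Set E, Φ = Φ₁ ∪ Φ₂ →
    (∀ a ∈ Φ₁, ∀ b ∈ Φ₂, ⟪a, b⟫_ℝ = 0) → Φ₁ = ∅ ∨ Φ₂ = ∅

/-- The reflection in (the hyperplane orthogonal to) a root `α` of squared length `2`. -/
def sRefl (α : E) : Function.End E := fun x => x - ⟪x, α⟫_ℝ • α

/-- The group generated by the reflections in the elements of `S`; since every reflection is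
an involution, the submonoid generated by the reflections coincides with the generated group. -/
def genBy (S : Set E) : Submonoid (Function.End E) :=
  Submonoid.closure (sRefl '' S)

/-- The Weyl group of `Φ`: the group generated by the reflections in all the roots. -/
abbrev WeylGroup (Φ : Set E) : Submonoid (Function.End E) := genBy Φ

/-- A base (set of simple roots) of `Φ`, together with the (unique) integer coefficients
`coeff δ γ` of each root `δ` with respect to the simple roots. -/
structure Base (Φ : Set E) where
  Δ : Finset E
  coeff : E → E → ℤ
  subset : ↑Δ ⊆ Φ
  indep : LinearIndependent ℝ (fun γ : {x : E // x ∈ Δ} => (γ : E))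
  expand : ∀ δ ∈ Φ, δ = ∑ γ ∈ Δ, (coeff δ γ : ℝ) • γ
  sign : ∀ δ ∈ Φ, (∀ γ ∈ Δ, 0 ≤ coeff δ γ) ∨ (∀ γ ∈ Δ, coeff δ γ ≤ 0)

variable {Φ : Set E}

/-- `θ` is the highest root of `Φ` with respect to the base `B`. -/
def IsHighest (B : Base Φ) (θ : E) : Prop :=
  θ ∈ Φ ∧ ∀ δ ∈ Φ, ∀ γ ∈ B.Δ, B.coeff δ γ ≤ B.coeff θ γ

/-- `α` is a Heisenberg simple root: the highest root `θ` has `α`-coefficient `2`, and every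
root other than `±θ` has `α`-coefficient in `{-1, 0, 1}`. -/
def IsHeisenberg (B : Base Φ) (θ α : E) : Prop :=
  B.coeff θ α = 2 ∧
    ∀ δ ∈ Φ, δ ≠ θ → δ ≠ -θ →
      B.coeff δ α = -1 ∨ B.coeff δ α = 0 ∨ B.coeff δ α = 1

/-- `α` is an extreme simple root with (unique) neighbour `β`. -/
def IsExtreme (B : Base Φ) (α β : E) : Prop :=
  β ∈ B.Δ ∧ β ≠ α ∧ ⟪α, β⟫_ℝ ≠ 0 ∧
    ∀ γ ∈ B.Δ, γ ≠ α → ⟪α, γ⟫_ℝ ≠ 0 → γ = β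

/-- `Φ_α`: the roots with `α`-coefficient `1` that are orthogonal to `α`. -/
def PhiSet (B : Base Φ) (α : E) : Set E :=
  {ε ∈ Φ | B.coeff ε α = 1 ∧ ⟪ε, α⟫_ℝ = 0}

/-- `Ψ_α`: the roots `ε` with `α`-coefficient `1` and `⟪ε, α⟫ ≤ 0`. -/
def PsiSet (B : Base Φ) (α : E) : Set E :=
  {ε ∈ Φ | B.coeff ε α = 1 ∧ ⟪ε, α⟫_ℝ ≤ 0}

/-- Uniqueness of the simple-root coefficients of a root. -/
lemma Base.coeff_unique (B : Base Φ) {δ : E} (hδ : δ ∈ Φ) (d : E → ℝ)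
    (h : δ = ∑ γ ∈ B.Δ, d γ • γ) : ∀ γ ∈ B.Δ, (B.coeff δ γ : ℝ) = d γ := by
  intro γ hγ
  have hz : ∑ x ∈ B.Δ.attach, (((B.coeff δ x : ℝ) - d x) • (x : E)) = 0 := by
    rw [Finset.sum_attach B.Δ (fun x => ((B.coeff δ x : ℝ) - d x) • x)]
    simp only [sub_smul, Finset.sum_sub_distrib]
    rw [← B.expand δ hδ, ← h, sub_self]
  have h0 := linearIndependent_iff'.mp B.indep B.Δ.attach
      (fun x => (B.coeff δ (x : E) : ℝ) - d (x : E)) hz ⟨γ, hγ⟩ (Finset.mem_attach _ _)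
  have := sub_eq_zero.mp h0
  exact this

open Classical in
/-- The indicator expansion of a simple root. -/
lemma Base.simple_expand (B : Base Φ) {γ : E} (hγ : γ ∈ B.Δ) :
    γ = ∑ x ∈ B.Δ, (if x = γ then (1:ℝ) else 0) • x := by
  simp only [ite_smul, one_smul, zero_smul]
  rw [Finset.sum_ite_eq' B.Δ γ (fun x => x), if_pos hγ]

open Classical in
/-- A simple root's coefficients are the indicator of itself. -/
lemma Base.coeff_simple (B : Base Φ) {γ : E} (hγ : γ ∈ B.Δ) :
    ∀ γ' ∈ B.Δ, (B.coeff γ γ' : ℝ) = if γ' = γ then 1 else 0 :=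
  B.coeff_unique (B.subset hγ) _ (B.simple_expand hγ)

/-- If `δ` is a root with `α`-coefficient `1` and `δ ≠ α`, then there is a simple root
`γ ≠ α` with `⟪δ, γ⟫ > 0`; consequently `δ - γ` is again a root with `α`-coefficient `1`. -/
theorem exists_simple_root_pos_pairing
    (hΦ : IsRootSystem Φ) (B : Base Φ)
    {α : E} (hα : α ∈ B.Δ) {δ : E} (hδ : δ ∈ Φ) (hc : B.coeff δ α = 1) (hne : δ ≠ α) :
    ∃ γ ∈ B.Δ, γ ≠ α ∧ 0 < ⟪δ, γ⟫_ℝ ∧ δ - γ ∈ Φ ∧ B.coeff (δ - γ) α = 1 := by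
  classical
  -- all coefficients of δ are nonnegative
  have hpos : ∀ γ ∈ B.Δ, 0 ≤ B.coeff δ γ := by
    rcases B.sign δ hδ with h | h
    · exact h
    · have := h α hα; omega
  have hint : ∀ γ ∈ B.Δ, ∃ n : ℤ, ⟪δ, γ⟫_ℝ = (n : ℝ) :=
    fun γ hγ => hΦ.cartan_int δ hδ γ (B.subset hγ)
  -- if δ ≠ γ for a root γ then ⟪δ, γ⟫ < 2
  have hlt2 : ∀ γ ∈ B.Δ, δ ≠ γ → ⟪δ, γ⟫_ℝ < 2 := by
    intro γ hγ hneq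
    have h1 : (0:ℝ) < ⟪δ - γ, δ - γ⟫_ℝ := by
      rcases (real_inner_self_nonneg (x := δ - γ)).lt_or_eq with h | h
      · exact h
      · exact absurd ((inner_self_eq_zero (𝕜 := ℝ)).mp h.symm)
          (sub_ne_zero.mpr hneq)
    have h2 : ⟪δ - γ, δ - γ⟫_ℝ = ⟪δ, δ⟫_ℝ - 2 * ⟪δ, γ⟫_ℝ + ⟪γ, γ⟫_ℝ := by
      rw [inner_sub_left, inner_sub_right, inner_sub_right, real_inner_comm γ δ]; ring
    have h3 := hΦ.norm_two δ hδ
    have h4 := hΦ.norm_two γ (B.subset hγ)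
    rw [h2, h3, h4] at h1; linarith
  have hδα : ⟪δ, α⟫_ℝ ≤ 1 := by
    obtain ⟨n, hn⟩ := hint α hα
    have hlt := hlt2 α hα hne
    rw [hn] at hlt ⊢
    have : n < 2 := by exact_mod_cast hlt
    exact_mod_cast (by omega : n ≤ 1)
  have hsum : ⟪δ, δ⟫_ℝ = ∑ γ ∈ B.Δ, (B.coeff δ γ : ℝ) * ⟪δ, γ⟫_ℝ := by
    calc ⟪δ, δ⟫_ℝ = ⟪δ, ∑ γ ∈ B.Δ, (B.coeff δ γ : ℝ) • γ⟫_ℝ := by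
          rw [← B.expand δ hδ]
      _ = ∑ γ ∈ B.Δ, (B.coeff δ γ : ℝ) * ⟪δ, γ⟫_ℝ := by
          rw [inner_sum]
          exact Finset.sum_congr rfl fun γ _ => real_inner_smul_right δ γ _
  -- find γ ≠ α with ⟪δ, γ⟫ > 0
  by_cases hex : ∃ γ ∈ B.Δ, γ ≠ α ∧ 0 < ⟪δ, γ⟫_ℝ
  · obtain ⟨γ, hγ, hγα, hp⟩ := hex
    have hδγ : δ ≠ γ := by
      intro h; subst h
      have := B.coeff_simple hγ α hα
      rw [hc, if_neg (Ne.symm hγα)] at this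
      norm_num at this
    have hone : ⟪δ, γ⟫_ℝ = 1 := by
      obtain ⟨n, hn⟩ := hint γ hγ
      have hlt := hlt2 γ hγ hδγ
      rw [hn] at hlt hp ⊢
      have h1 : n < 2 := by exact_mod_cast hlt
      have h2 : 0 < n := by exact_mod_cast hp
      exact_mod_cast (by omega : n = 1)
    have hmem : δ - γ ∈ Φ := by
      have := hΦ.reflect_mem γ (B.subset hγ) δ hδ
      rwa [hone, one_smul] at this
    refine ⟨γ, hγ, hγα, hp, hmem, ?_⟩
    have hexp : δ - γ = ∑ x ∈ B.Δ, ((B.coeff δ x : ℝ) - if x = γ then 1 else 0) • x := by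
      simp only [sub_smul, Finset.sum_sub_distrib]
      rw [← B.expand δ hδ]
      congr 1
      exact B.simple_expand hγ
    have := B.coeff_unique hmem _ hexp α hα
    rw [if_neg (Ne.symm hγα), hc] at this
    exact_mod_cast this
  · exfalso
    push_neg at hex
    have h2 : ⟪δ, δ⟫_ℝ = 2 := hΦ.norm_two δ hδ
    have hbound : ∑ γ ∈ B.Δ, (B.coeff δ γ : ℝ) * ⟪δ, γ⟫_ℝ ≤ (B.coeff δ α : ℝ) * ⟪δ, α⟫_ℝ := by
      rw [← Finset.add_sum_erase _ _ hα]
      have : ∑ γ ∈ B.Δ.erase α, (B.coeff δ γ : ℝ) * ⟪δ, γ⟫_ℝ ≤ 0 := by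
        apply Finset.sum_nonpos
        intro γ hγ
        have hγΔ := Finset.mem_of_mem_erase hγ
        have hγα := Finset.ne_of_mem_erase hγ
        exact mul_nonpos_of_nonneg_of_nonpos
          (by exact_mod_cast hpos γ hγΔ) (hex γ hγΔ hγα)
      linarith
    have : (2:ℝ) ≤ ⟪δ, α⟫_ℝ := by
      calc (2:ℝ) = ⟪δ, δ⟫_ℝ := h2.symm
        _ = ∑ γ ∈ B.Δ, (B.coeff δ γ : ℝ) * ⟪δ, γ⟫_ℝ := hsum
        _ ≤ (B.coeff δ α : ℝ) * ⟪δ, α⟫_ℝ := hbound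
        _ = ⟪δ, α⟫_ℝ := by rw [hc]; norm_num
    linarith

end PaperRS
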